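/- For every finite simple graph G and every integer d ≥ 2 with χ(G) ≤ 2^d, G can be located on at most χ(G) columns in ℤ^d. -/

import Mathlib

open SimpleGraph

/-- Cast an integer grid point to a real point. -/
def castPt {d : ℕ} (p : Fin d → ℤ) : Fin d → ℝ := fun i => (p i : ℝ)

/-- The grid points lying on the closed segment in `ℝ^d` joining `a` and `b`. -/
def segGridPts {d : ℕ} (a b : Fin d → ℤ) : Set (Fin d → ℤ) :=
  {p | castPt p ∈ segment ℝ (castPt a) (castPt b)}

/-- `φ` is a grid drawing of `G` in `ℤ^d`: it is injective and no vertex image other than the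
endpoints lies on the closed segment representing an edge. -/
def IsGridDrawing {V : Type*} {d : ℕ} (G : SimpleGraph V) (φ : V → Fin d → ℤ) : Prop :=
  Function.Injective φ ∧
    ∀ u v w : V, G.Adj u v →
      castPt (φ w) ∈ segment ℝ (castPt (φ u)) (castPt (φ v)) → w = u ∨ w = v

/-- `G` is `q`-locatable in `ℤ^d`: it has a grid drawing in which every edge segment contains
at most `q` grid points. -/
def IsQLocatable {V : Type*} (G : SimpleGraph V) (d q : ℕ) : Prop :=
  ∃ φ : V → Fin d → ℤ, IsGridDrawing G φ ∧
    ∀ u v : V, G.Adj u v → (segGridPts (φ u) (φ v)).ncard ≤ q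

/-- A primitive grid drawing: every edge segment contains exactly its two endpoints
as grid points. -/
def IsPrimitiveDrawing {V : Type*} {d : ℕ} (G : SimpleGraph V) (φ : V → Fin d → ℤ) : Prop :=
  IsGridDrawing G φ ∧ ∀ u v : V, G.Adj u v → segGridPts (φ u) (φ v) = {φ u, φ v}

/-- `G` is locatable in `ℤ^d`: it has a primitive grid drawing in `ℤ^d`. -/
def IsLocatable {V : Type*} (G : SimpleGraph V) (d : ℕ) : Prop :=
  ∃ φ : V → Fin d → ℤ, IsPrimitiveDrawing G φ

/-- The rank of a grid point in `ℤ^d`: the tuple of its first `d - 1` coordinates. -/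
def rank {d : ℕ} (p : Fin d → ℤ) : Fin (d - 1) → ℤ :=
  fun i => p (Fin.castLE (Nat.sub_le d 1) i)

/-- `G` is embeddable on `l` columns: it has a grid drawing in `ℤ²` in which the first
coordinates of the vertex images take at most `l` distinct values. -/
def EmbeddableOnCols {V : Type*} (G : SimpleGraph V) (l : ℕ) : Prop :=
  ∃ φ : V → Fin 2 → ℤ, IsGridDrawing G φ ∧ (Set.range fun v => φ v 0).ncard ≤ l

/-- `G` can be located on `l` columns in `ℤ^d`: it has a primitive grid drawing in `ℤ^d`
using at most `l` columns. -/
def LocatableOnCols {V : Type*} (G : SimpleGraph V) (d l : ℕ) : Prop :=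
  ∃ φ : V → Fin d → ℤ, IsPrimitiveDrawing G φ ∧ (Set.range fun v => rank (φ v)).ncard ≤ l

/-- A linear forest: an acyclic graph with maximum degree at most two
(i.e. a disjoint union of paths). -/
def IsLinearForest {W : Type*} (H : SimpleGraph W) : Prop :=
  H.IsAcyclic ∧ ∀ v : W, {w | H.Adj v w}.ncard ≤ 2

/- ### Auxiliary material for the proof -/

/-- If the direction vector of the segment from `a` to `b` has only unit common divisors,
then the only grid points on the segment are the endpoints. -/
lemma seg_prim {d : ℕ} (a b : Fin d → ℤ) (hab : a ≠ b)
    (hp : ∀ n : ℤ, (∀ i, n ∣ (b i - a i)) → IsUnit n) :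
    segGridPts a b = {a, b} := by
  ext p
  simp only [segGridPts, Set.mem_setOf_eq, Set.mem_insert_iff, Set.mem_singleton_iff]
  constructor
  · intro hmem
    rw [segment_eq_image] at hmem
    obtain ⟨t, ⟨ht0, ht1⟩, hte⟩ := hmem
    have hpt : ∀ i, ((p i : ℝ) - a i) = t * ((b i : ℝ) - a i) := by
      intro i
      have hc := congrFun hte i
      simp only [castPt, Pi.add_apply, Pi.smul_apply, smul_eq_mul] at hc
      nlinarith [hc]
    obtain ⟨i0, hi0⟩ := Function.ne_iff.mp hab
    have hm0 : b i0 - a i0 ≠ 0 := sub_ne_zero.mpr (Ne.symm hi0)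
    have key : ∀ i, (b i0 - a i0) * (p i - a i) = (p i0 - a i0) * (b i - a i) := by
      intro i
      have h1 := hpt i
      have h2 := hpt i0
      have hr : ((b i0 : ℝ) - a i0) * ((p i : ℝ) - a i)
          = ((p i0 : ℝ) - a i0) * ((b i : ℝ) - a i) := by
        rw [h1, h2]; ring
      exact_mod_cast hr
    set q : ℤ := p i0 - a i0 with hq
    set m : ℤ := b i0 - a i0 with hm
    have hg0 : 0 < Int.gcd q m := Int.gcd_pos_iff.mpr (Or.inr hm0)
    set g : ℤ := (Int.gcd q m : ℤ) with hgdef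
    have hgne : g ≠ 0 := by
      simp only [hgdef]
      exact_mod_cast hg0.ne'
    have hq_dvd : g ∣ q := Int.gcd_dvd_left q m
    have hm_dvd : g ∣ m := Int.gcd_dvd_right q m
    have hq_eq : g * (q / g) = q := Int.mul_ediv_cancel' hq_dvd
    have hm_eq : g * (m / g) = m := Int.mul_ediv_cancel' hm_dvd
    have hcop : IsCoprime (q / g) (m / g) :=
      Int.isCoprime_iff_gcd_eq_one.mpr (Int.gcd_div_gcd_div_gcd hg0)
    have key' : ∀ i, (m / g) * (p i - a i) = (q / g) * (b i - a i) := by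
      intro i
      have hk := key i
      rw [← hm_eq, ← hq_eq] at hk
      apply mul_left_cancel₀ hgne
      linear_combination hk
    have hdvd' : ∀ i, (m / g) ∣ (b i - a i) := by
      intro i
      exact (hcop.symm).dvd_of_dvd_mul_left ⟨p i - a i, (key' i).symm⟩
    have hu : IsUnit (m / g) := hp _ hdvd'
    have hmq : m ∣ q := by
      rcases Int.isUnit_iff.mp hu with h1 | h1
      · have : m = g := by rw [← hm_eq, h1, mul_one]
        rw [this]; exact hq_dvd
      · have : m = -g := by rw [← hm_eq, h1]; ring
        rw [this]; exact (neg_dvd).mpr hq_dvd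
    obtain ⟨n, hn⟩ := hmq
    have hq2 : (p i0 : ℝ) - a i0 = ((b i0 : ℝ) - a i0) * n := by
      have := congrArg (fun z : ℤ => (z : ℝ)) hn
      push_cast at this
      simpa [hq, hm] using this
    have hmr : ((b i0 : ℝ) - a i0) ≠ 0 := by
      intro hzero
      apply hm0
      exact_mod_cast hzero
    have htn : t = (n : ℝ) := by
      have h2 := hpt i0
      apply mul_right_cancel₀ hmr
      rw [← h2, hq2]; ring
    have hn01 : n = 0 ∨ n = 1 := by
      rw [htn] at ht0 ht1
      have h0 : (0 : ℤ) ≤ n := by exact_mod_cast ht0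
      have h1 : n ≤ 1 := by exact_mod_cast ht1
      omega
    rcases hn01 with rfl | rfl
    · left
      funext i
      have := hpt i
      rw [htn] at this
      push_cast at this
      have : (p i : ℝ) = a i := by linarith
      exact_mod_cast this
    · right
      funext i
      have := hpt i
      rw [htn] at this
      push_cast at this
      have : (p i : ℝ) = b i := by linarith
      exact_mod_cast this
  · rintro (rfl | rfl)
    · exact left_mem_segment ℝ _ _
    · exact right_mem_segment ℝ _ _

/-- The arithmetic core: divisibility by both the last column-coordinate difference and the
height difference forces a unit. -/
lemma key_div (n x1 x2 y1 y2 m1 m2 : ℤ)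
    (hx1 : x1 = 0 ∨ x1 = 1) (hx2 : x2 = 0 ∨ x2 = 1)
    (hy1 : y1 = 0 ∨ y1 = 1) (hy2 : y2 = 0 ∨ y2 = 1)
    (hne : ¬(x1 = x2 ∧ y1 = y2))
    (h1 : n ∣ (x2 + 2 * y2) - (x1 + 2 * y1))
    (h2 : n ∣ (6 * m2 + (x2 + y2)) - (6 * m1 + (x1 + y1))) : IsUnit n := by
  have ha : (x2 + 2 * y2) - (x1 + 2 * y1) = 1 ∨ (x2 + 2 * y2) - (x1 + 2 * y1) = -1 ∨
      (x2 + 2 * y2) - (x1 + 2 * y1) = 2 ∨ (x2 + 2 * y2) - (x1 + 2 * y1) = -2 ∨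
      (x2 + 2 * y2) - (x1 + 2 * y1) = 3 ∨ (x2 + 2 * y2) - (x1 + 2 * y1) = -3 := by
    omega
  have ha6 : ((x2 + 2 * y2) - (x1 + 2 * y1)) ∣ 6 := by
    rcases ha with hh | hh | hh | hh | hh | hh <;> rw [hh] <;> norm_num
  have hn6 : n ∣ 6 := h1.trans ha6
  have hb : n ∣ (x2 + y2) - (x1 + y1) := by
    have h3 := h2.sub (hn6.mul_right (m2 - m1))
    have e : (x2 + y2) - (x1 + y1) = (6 * m2 + (x2 + y2)) - (6 * m1 + (x1 + y1)) - 6 * (m2 - m1) := by ring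
    rw [e]; exact h3
  by_cases hy : y1 = y2
  · subst hy
    have h1' : n ∣ x2 - x1 := by
      convert h1 using 1
      ring
    have hx : x2 - x1 = 1 ∨ x2 - x1 = -1 := by omega
    rcases hx with hh | hh <;> rw [hh] at h1'
    · exact isUnit_of_dvd_one h1'
    · exact isUnit_of_dvd_one ((dvd_neg).mp h1')
  · have hyd : n ∣ y2 - y1 := by
      have h3 := h1.sub hb
      have e : y2 - y1 = (x2 + 2 * y2) - (x1 + 2 * y1) - ((x2 + y2) - (x1 + y1)) := by ring
      rw [e]; exact h3
    have hyv : y2 - y1 = 1 ∨ y2 - y1 = -1 := by omega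
    rcases hyv with hh | hh <;> rw [hh] at hyd
    · exact isUnit_of_dvd_one hyd
    · exact isUnit_of_dvd_one ((dvd_neg).mp hyd)

/-- The `j`-th bit of color `c` as an integer. -/
def tbit {k : ℕ} (c : Fin k) (j : ℕ) : ℤ := if (c : ℕ).testBit j then 1 else 0

/-- The column assigned to color `c`. -/
def colfun (d : ℕ) {k : ℕ} (c : Fin k) (i : Fin (d - 1)) : ℤ :=
  if (i : ℕ) = d - 2 then tbit c (d - 2) + 2 * tbit c (d - 1) else tbit c (i : ℕ)

/-- The height residue assigned to color `c`. -/
def rfun (d : ℕ) {k : ℕ} (c : Fin k) : ℤ := tbit c (d - 2) + tbit c (d - 1)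

/-- The grid point of a vertex with color `c` and index `m`. -/
def phifun (d : ℕ) {k : ℕ} (c : Fin k) (m : ℕ) (i : Fin d) : ℤ :=
  if h : (i : ℕ) = d - 1 then 6 * (m : ℤ) + rfun d c
  else colfun d c ⟨(i : ℕ), by have := i.isLt; omega⟩

lemma tbit_cases {k : ℕ} (c : Fin k) (j : ℕ) : tbit c j = 0 ∨ tbit c j = 1 := by
  unfold tbit; split <;> simp

lemma tbit_eq_iff {k : ℕ} (c c' : Fin k) (j : ℕ) :
    tbit c j = tbit c' j ↔ (c : ℕ).testBit j = (c' : ℕ).testBit j := by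
  unfold tbit
  cases h1 : (c : ℕ).testBit j <;> cases h2 : (c' : ℕ).testBit j <;> simp

lemma phifun_last (d : ℕ) {k : ℕ} (c : Fin k) (m : ℕ) (hd : 2 ≤ d) :
    phifun d c m ⟨d - 1, by omega⟩ = 6 * (m : ℤ) + rfun d c := by
  simp [phifun]

lemma phifun_castLE (d : ℕ) {k : ℕ} (c : Fin k) (m : ℕ) (i : Fin (d - 1)) :
    phifun d c m (Fin.castLE (Nat.sub_le d 1) i) = colfun d c i := by
  have hi := i.isLt
  show (if h : (i : ℕ) = d - 1 then 6 * (m : ℤ) + rfun d c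
    else colfun d c ⟨(i : ℕ), by omega⟩) = colfun d c i
  rw [dif_neg (by omega : ¬ (i : ℕ) = d - 1)]

lemma phifun_mk_last (d : ℕ) {k : ℕ} (c : Fin k) (m : ℕ) (h : d - 1 < d) :
    phifun d c m ⟨d - 1, h⟩ = 6 * (m : ℤ) + rfun d c := by
  show (if h : d - 1 = d - 1 then 6 * (m : ℤ) + rfun d c
    else colfun d c ⟨d - 1, by omega⟩) = _
  rw [dif_pos rfl]

lemma colfun_mk_ne (d : ℕ) {k : ℕ} (c : Fin k) (j : ℕ) (hj : j < d - 1) (hne : j ≠ d - 2) :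
    colfun d c ⟨j, hj⟩ = tbit c j := by
  show (if j = d - 2 then tbit c (d - 2) + 2 * tbit c (d - 1) else tbit c j) = tbit c j
  rw [if_neg hne]

lemma colfun_mk_eq (d : ℕ) {k : ℕ} (c : Fin k) (hj : d - 2 < d - 1) :
    colfun d c ⟨d - 2, hj⟩ = tbit c (d - 2) + 2 * tbit c (d - 1) := by
  show (if d - 2 = d - 2 then tbit c (d - 2) + 2 * tbit c (d - 1) else tbit c (d - 2)) = _
  rw [if_pos rfl]

/-- The main construction: given a proper coloring with `k ≤ 2 ^ d` colors, the graph can be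
located on `k` columns in `ℤ^d`. -/
lemma construction {V : Type*} [Fintype V] (G : SimpleGraph V) (d k : ℕ) (hd : 2 ≤ d)
    (hk : k ≤ 2 ^ d) (C : G.Coloring (Fin k)) : LocatableOnCols G d k := by
  classical
  have hd1 : d - 1 < d := by omega
  have hd2 : d - 2 < d - 1 := by omega
  set e : V → ℕ := fun v => ((Fintype.equivFin V) v : ℕ) with he_def
  have he : Function.Injective e := by
    intro u v huv
    exact (Fintype.equivFin V).injective (Fin.val_injective huv)
  set φ : V → Fin d → ℤ := fun v => phifun d (C v) (e v) with hφ_def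
  have hφ_last : ∀ v : V, φ v ⟨d - 1, hd1⟩ = 6 * (e v : ℤ) + rfun d (C v) := by
    intro v
    rw [hφ_def]
    exact phifun_mk_last d (C v) (e v) hd1
  have hφ_col : ∀ (v : V) (i : Fin (d - 1)),
      φ v (Fin.castLE (Nat.sub_le d 1) i) = colfun d (C v) i := by
    intro v i
    rw [hφ_def]
    exact phifun_castLE d (C v) (e v) i
  -- injectivity
  have hrr : ∀ c : Fin k, 0 ≤ rfun d c ∧ rfun d c ≤ 2 := by
    intro c
    rcases tbit_cases c (d - 2) with h1 | h1 <;> rcases tbit_cases c (d - 1) with h2 | h2 <;>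
      simp [rfun, h1, h2]
  have hinj : Function.Injective φ := by
    intro u v huv
    have hh := congrFun huv ⟨d - 1, hd1⟩
    rw [hφ_last u, hφ_last v] at hh
    obtain ⟨h1, h2⟩ := hrr (C u)
    obtain ⟨h3, h4⟩ := hrr (C v)
    have : e u = e v := by omega
    exact he this
  -- primitivity
  have hprim : ∀ u v : V, G.Adj u v → ∀ n : ℤ, (∀ i, n ∣ (φ v i - φ u i)) → IsUnit n := by
    intro u v hadj n hn
    have hcne : C u ≠ C v := C.valid hadj
    by_cases hbit : ∃ j, j < d - 2 ∧ (C u : ℕ).testBit j ≠ (C v : ℕ).testBit j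
    · obtain ⟨j, hj, hne⟩ := hbit
      have hj' : j < d - 1 := by omega
      have hdj := hn (Fin.castLE (Nat.sub_le d 1) ⟨j, hj'⟩)
      rw [hφ_col u, hφ_col v] at hdj
      rw [colfun_mk_ne d (C u) j hj' (by omega), colfun_mk_ne d (C v) j hj' (by omega)] at hdj
      have hdj' : n ∣ tbit (C v) j - tbit (C u) j := hdj
      rcases tbit_cases (C u) j with hbu | hbu <;> rcases tbit_cases (C v) j with hbv | hbv <;>
        rw [hbu, hbv] at hdj'
      · exact absurd ((tbit_eq_iff _ _ _).mp (hbu.trans hbv.symm)) hne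
      · exact isUnit_of_dvd_one (by simpa using hdj')
      · exact isUnit_of_dvd_one ((dvd_neg).mp (by simpa using hdj'))
      · exact absurd ((tbit_eq_iff _ _ _).mp (hbu.trans hbv.symm)) hne
    · push_neg at hbit
      have hpair : ¬((C u : ℕ).testBit (d - 2) = (C v : ℕ).testBit (d - 2) ∧
          (C u : ℕ).testBit (d - 1) = (C v : ℕ).testBit (d - 1)) := by
        rintro ⟨hp1, hp2⟩
        apply hcne
        apply Fin.val_injective
        apply Nat.eq_of_testBit_eq
        intro j
        by_cases hj1 : j < d - 2
        · exact hbit j hj1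
        · by_cases hj2 : j = d - 2
          · rw [hj2]; exact hp1
          · by_cases hj3 : j = d - 1
            · rw [hj3]; exact hp2
            · have hdj : d ≤ j := by omega
              have hu' : (C u : ℕ) < 2 ^ j :=
                lt_of_lt_of_le (C u).isLt (hk.trans (Nat.pow_le_pow_right (by norm_num) hdj))
              have hv' : (C v : ℕ) < 2 ^ j :=
                lt_of_lt_of_le (C v).isLt (hk.trans (Nat.pow_le_pow_right (by norm_num) hdj))
              rw [Nat.testBit_eq_false_of_lt hu', Nat.testBit_eq_false_of_lt hv']
      have h1 := hn (Fin.castLE (Nat.sub_le d 1) ⟨d - 2, hd2⟩)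
      rw [hφ_col u, hφ_col v, colfun_mk_eq d (C u) hd2, colfun_mk_eq d (C v) hd2] at h1
      have h2 := hn ⟨d - 1, hd1⟩
      rw [hφ_last u, hφ_last v] at h2
      refine key_div n (tbit (C u) (d - 2)) (tbit (C v) (d - 2)) (tbit (C u) (d - 1))
        (tbit (C v) (d - 1)) (e u) (e v) (tbit_cases _ _) (tbit_cases _ _) (tbit_cases _ _)
        (tbit_cases _ _) ?_ h1 (by simpa [rfun] using h2)
      rintro ⟨hq1, hq2⟩
      exact hpair ⟨(tbit_eq_iff _ _ _).mp hq1, (tbit_eq_iff _ _ _).mp hq2⟩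
  have hseg : ∀ u v : V, G.Adj u v → segGridPts (φ u) (φ v) = {φ u, φ v} := by
    intro u v hadj
    exact seg_prim (φ u) (φ v) (fun hh => hadj.ne (hinj hh)) (hprim u v hadj)
  refine ⟨φ, ⟨⟨hinj, ?_⟩, hseg⟩, ?_⟩
  · intro u v w hadj hw
    have hmem : φ w ∈ segGridPts (φ u) (φ v) := hw
    rw [hseg u v hadj] at hmem
    rcases hmem with hh | hh
    · exact Or.inl (hinj hh)
    · exact Or.inr (hinj hh)
  · have hrank : ∀ v, rank (φ v) = colfun d (C v) := by
      intro v
      funext i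
      exact hφ_col v i
    have hsub : (Set.range fun v => rank (φ v)) ⊆ Set.range (colfun d (k := k)) := by
      rintro _ ⟨v, rfl⟩
      exact ⟨C v, (hrank v).symm⟩
    have hcard : (Set.range (colfun d (k := k))).ncard ≤ k := by
      rw [← Set.image_univ]
      refine le_trans (Set.ncard_image_le Set.finite_univ) ?_
      simp [Set.ncard_univ]
    exact le_trans (Set.ncard_le_ncard hsub (Set.finite_range _)) hcard

theorem locatableOnCols_chromaticNumber {V : Type*} [Fintype V] (G : SimpleGraph V)
    (d : ℕ) (hd : 2 ≤ d) (h : G.chromaticNumber ≤ ((2 ^ d : ℕ) : ℕ∞)) :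
    LocatableOnCols G d G.chromaticNumber.toNat := by
  have hne : G.chromaticNumber ≠ ⊤ := ne_top_of_le_ne_top (ENat.coe_ne_top _) h
  have hcol : G.Colorable G.chromaticNumber.toNat := by
    rw [← SimpleGraph.chromaticNumber_le_iff_colorable]
    exact le_of_eq (ENat.coe_toNat hne).symm
  have hk2 : G.chromaticNumber.toNat ≤ 2 ^ d := by
    have := ENat.toNat_le_toNat h (ENat.coe_ne_top _)
    simpa only [ENat.toNat_coe] using this
  obtain ⟨C⟩ := hcol
  exact construction G d _ hd hk2 C
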